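/- Let k ≥ 1, let a, b ∈ ℤ^k, and let Ω be the k×(k+2) integer matrix whose first k columns form the identity, whose (k+1)-st column is a, and whose (k+2)-nd column is b; assume Ω is non-degenerate. For each spanning tree T on the vertex set {1,…,k+2}, let w(T) = ∏_{{p,q}∈T} |Δ_{p,q}|. Then the sum of w(T) over all spanning trees T on {1,…,k+2} is strictly greater than |a_1⋯a_k| + |b_1⋯b_k|. -/

import Mathlib

/-- The `k × k` minor of a `k × n` integer matrix `Ω` on the set `s` of column indices
(taken in increasing order); junk value `0` if `s` does not have exactly `k` elements. -/
def minorOn {k n : ℕ} (Ω : Matrix (Fin k) (Fin n) ℤ) (s : Finset (Fin n)) : ℤ :=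
  if h : s.card = k then (Ω.submatrix id (s.orderEmbOfFin h)).det else 0

/-- A weight matrix is non-degenerate if all of its `k × k` minors are nonzero. -/
def NonDegenerate {k n : ℕ} (Ω : Matrix (Fin k) (Fin n) ℤ) : Prop :=
  ∀ s : Finset (Fin n), s.card = k → minorOn Ω s ≠ 0

/-- For a `k × (k+2)` matrix, the minor `Δ_{p,q}` obtained by deleting columns `p` and `q`. -/
def deleteTwoMinor {k : ℕ} (Ω : Matrix (Fin k) (Fin (k+2)) ℤ) (p q : Fin (k+2)) : ℤ :=
  minorOn Ω ({p, q}ᶜ)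

/-- The `k × (k+2)` weight matrix whose first `k` columns form the identity,
whose `(k+1)`-st column is `a`, and whose `(k+2)`-nd column is `b`. -/
def weightMatrix {k : ℕ} (a b : Fin k → ℤ) : Matrix (Fin k) (Fin (k+2)) ℤ :=
  Matrix.of fun i j =>
    if (j : ℕ) < k then (if (i : ℕ) = (j : ℕ) then 1 else 0)
    else if (j : ℕ) = k then a i else b i

/-- A "star" graph (all edges incident to `c`) is a tree. -/
lemma star_isTree {V : Type*} [Nonempty V] (c : V) (G : SimpleGraph V)
    (h : ∀ x y, G.Adj x y ↔ x ≠ y ∧ (x = c ∨ y = c)) : G.IsTree := by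
  have key : ∀ x : V, x ≠ c → ¬ (G \ SimpleGraph.fromEdgeSet {s(x, c)}).Reachable x c := by
    intro x hx ⟨p⟩
    cases p with
    | nil => exact hx rfl
    | cons hadj q =>
      rename_i z
      rw [SimpleGraph.sdiff_adj, SimpleGraph.fromEdgeSet_adj] at hadj
      obtain ⟨hG, hnot⟩ := hadj
      have hz : z = c := by
        rcases ((h x z).1 hG).2 with h1 | h1
        · exact absurd h1 hx
        · exact h1
      exact hnot ⟨by rw [hz]; simp, ((h x z).1 hG).1⟩
  constructor
  · rw [SimpleGraph.connected_iff]
    refine ⟨fun u v => ?_, ⟨c⟩⟩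
    have hr : ∀ x : V, x ≠ c → G.Reachable x c := fun x hx =>
      ((h x c).2 ⟨hx, Or.inr rfl⟩).reachable
    by_cases huv : u = v
    · exact huv ▸ SimpleGraph.Reachable.refl u
    by_cases hu : u = c
    · subst hu; exact (hr v (fun hv => huv hv.symm)).symm
    by_cases hv : v = c
    · subst hv; exact hr u hu
    · exact (hr u hu).trans (hr v hv).symm
  · rw [SimpleGraph.isAcyclic_iff_forall_adj_isBridge]
    intro v w hvw
    rw [SimpleGraph.isBridge_iff]
    obtain ⟨hne, hc⟩ := (h v w).1 hvw
    rcases hc with rfl | rfl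
    · rw [Sym2.eq_swap]
      intro hreach
      exact key w (fun hw => hne hw.symm) hreach.symm
    · exact key v hne

/-- Two injections with the same range give the same minor up to sign. -/
lemma abs_det_submatrix_range_eq {k n : ℕ} (Ω : Matrix (Fin k) (Fin n) ℤ)
    {f g : Fin k → Fin n} (hf : Function.Injective f) (hg : Function.Injective g)
    (h : Set.range f = Set.range g) :
    |(Ω.submatrix id f).det| = |(Ω.submatrix id g).det| := by
  set σ : Equiv.Perm (Fin k) :=
    ((Equiv.ofInjective g hg).trans (Equiv.setCongr h.symm)).trans
      (Equiv.ofInjective f hf).symm with hσ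
  have hfg : ∀ x, f (σ x) = g x := by
    intro x
    have h1 : σ x = (Equiv.ofInjective f hf).symm
        ⟨g x, by rw [h]; exact ⟨x, rfl⟩⟩ := rfl
    rw [h1]
    exact Equiv.apply_ofInjective_symm hf _
  have hsub : Ω.submatrix id g = (Ω.submatrix id f).submatrix id σ := by
    ext i t
    simp [hfg]
  rw [hsub, Matrix.det_permute' σ]
  rcases Int.units_eq_one_or (Equiv.Perm.sign σ) with hs | hs <;> rw [hs] <;> simp

lemma abs_minorOn_eq {k n : ℕ} (Ω : Matrix (Fin k) (Fin n) ℤ) (s : Finset (Fin n))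
    (h : s.card = k) (g : Fin k → Fin n) (hg : Function.Injective g)
    (hr : Set.range g = ↑s) :
    |minorOn Ω s| = |(Ω.submatrix id g).det| := by
  rw [minorOn, dif_pos h]
  exact abs_det_submatrix_range_eq Ω (s.orderEmbOfFin h).injective hg
    (by rw [Finset.range_orderEmbOfFin, hr])

lemma compl_pair_card {m : ℕ} {p q : Fin (m+2)} (hpq : p ≠ q) :
    ({p, q}ᶜ : Finset (Fin (m+2))).card = m := by
  rw [Finset.card_compl, Finset.card_insert_of_notMem (by simp [hpq]), Finset.card_singleton]
  simp
lemma abs_minor_gen {k : ℕ} (a b : Fin k → ℤ) (j : Fin k) (e f : Fin (k+2)) (v : Fin k → ℤ)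
    (he : ∀ i, weightMatrix a b i e = v i)
    (hef : ((e:ℕ) = k ∧ (f:ℕ) = k+1) ∨ ((e:ℕ) = k+1 ∧ (f:ℕ) = k)) :
    |deleteTwoMinor (weightMatrix a b) ⟨j, by omega⟩ f| = |v j| := by
  have hj := j.2
  set J : Fin (k+2) := ⟨j, by omega⟩ with hJ
  have hke : k ≤ (e:ℕ) := by rcases hef with ⟨h1,_⟩|⟨h1,_⟩ <;> omega
  have hkf : k ≤ (f:ℕ) := by rcases hef with ⟨_,h1⟩|⟨_,h1⟩ <;> omega
  have hef' : (e:ℕ) ≠ (f:ℕ) := by rcases hef with ⟨h1,h2⟩|⟨h1,h2⟩ <;> omega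
  set g : Fin k → Fin (k+2) := fun t => if t = j then e else ⟨t, by omega⟩ with hgdef
  have hg : Function.Injective g := by
    intro s t hst
    have hs2 := s.2; have ht2 := t.2
    by_cases hs : s = j <;> by_cases ht : t = j
    · rw [hs, ht]
    · exfalso; rw [hgdef] at hst; simp only [if_pos hs, if_neg ht] at hst
      rw [Fin.ext_iff] at hst; simp at hst; omega
    · exfalso; rw [hgdef] at hst; simp only [if_neg hs, if_pos ht] at hst
      rw [Fin.ext_iff] at hst; simp at hst; omega
    · rw [hgdef] at hst; simp only [if_neg hs, if_neg ht] at hst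
      rw [Fin.ext_iff] at hst; simp at hst; exact Fin.ext hst
  have hr : Set.range g = (({J, f}ᶜ : Finset (Fin (k+2))) : Set (Fin (k+2))) := by
    ext x
    simp only [Set.mem_range, Finset.coe_compl, Set.mem_compl_iff, Finset.mem_coe,
      Finset.mem_insert, Finset.mem_singleton, not_or]
    constructor
    · rintro ⟨t, rfl⟩
      have ht2 := t.2
      by_cases ht : t = j
      · rw [hgdef]; simp only [if_pos ht]
        constructor <;> intro hx <;> rw [Fin.ext_iff] at hx
        · simp [hJ] at hx; omega
        · omega
      · rw [hgdef]; simp only [if_neg ht]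
        constructor <;> intro hx <;> rw [Fin.ext_iff] at hx <;> simp [hJ] at hx
        · exact ht (Fin.ext hx)
        · omega
    · rintro ⟨h1, h2⟩
      by_cases hx : (x:ℕ) = (e:ℕ)
      · exact ⟨j, by rw [hgdef]; simp only [if_pos rfl]; exact (Fin.ext hx).symm⟩
      · have hx2 := x.2
        have hxf : (x:ℕ) ≠ (f:ℕ) := fun hc => h2 (Fin.ext hc)
        have hxj : (x:ℕ) ≠ (j:ℕ) := fun hc => h1 (by rw [hJ]; exact Fin.ext hc)
        have hxk : (x:ℕ) < k := by rcases hef with ⟨he1,hf1⟩|⟨he1,hf1⟩ <;> omega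
        refine ⟨⟨x, hxk⟩, ?_⟩
        rw [hgdef]
        have : (⟨x, hxk⟩ : Fin k) ≠ j := fun hc => hxj (by rw [← hc])
        simp only [if_neg this]
  have hJf : J ≠ f := by rw [hJ]; intro hc; rw [Fin.ext_iff] at hc; simp at hc; omega
  have hcard : ({J, f}ᶜ : Finset (Fin (k+2))).card = k := compl_pair_card hJf
  have hsub : (weightMatrix a b).submatrix id g
      = (1 : Matrix (Fin k) (Fin k) ℤ).updateCol j v := by
    ext i t
    rw [Matrix.submatrix_apply, Matrix.updateCol_apply]
    by_cases ht : t = j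
    · rw [if_pos ht, hgdef]; simp only [if_pos ht, id]
      exact he i
    · rw [if_neg ht, hgdef]; simp only [if_neg ht, id]
      have ht2 := t.2
      rw [weightMatrix, Matrix.of_apply, if_pos (by simpa using ht2), Matrix.one_apply]
      simp only [Fin.ext_iff]
  rw [deleteTwoMinor, abs_minorOn_eq _ _ hcard g hg hr, hsub]
  have : ((1 : Matrix (Fin k) (Fin k) ℤ).updateCol j v).det = v j := by
    rw [← Matrix.cramer_apply, Matrix.cramer_one]; rfl
  rw [this]

lemma abs_minor_a {k : ℕ} (a b : Fin k → ℤ) (j : Fin k) :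
    |deleteTwoMinor (weightMatrix a b) ⟨j, by omega⟩ ⟨k+1, by omega⟩| = |a j| := by
  refine abs_minor_gen a b j ⟨k, by omega⟩ ⟨k+1, by omega⟩ a (fun i => ?_) (Or.inl ⟨rfl, rfl⟩)
  simp [weightMatrix]

lemma abs_minor_b {k : ℕ} (a b : Fin k → ℤ) (j : Fin k) :
    |deleteTwoMinor (weightMatrix a b) ⟨j, by omega⟩ ⟨k, by omega⟩| = |b j| := by
  refine abs_minor_gen a b j ⟨k+1, by omega⟩ ⟨k, by omega⟩ b (fun i => ?_) (Or.inr ⟨rfl, rfl⟩)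
  simp [weightMatrix]

lemma abs_minor_one {k : ℕ} (a b : Fin k → ℤ) :
    |deleteTwoMinor (weightMatrix a b) ⟨k, by omega⟩ ⟨k+1, by omega⟩| = 1 := by
  set vK : Fin (k+2) := ⟨k, by omega⟩ with hK
  set vB : Fin (k+2) := ⟨k+1, by omega⟩ with hB
  set g : Fin k → Fin (k+2) := fun t => ⟨t, by omega⟩ with hgdef
  have hg : Function.Injective g := by
    intro s t hst; rw [hgdef] at hst; rw [Fin.ext_iff] at hst; simp at hst; exact Fin.ext hst
  have hr : Set.range g = (({vK, vB}ᶜ : Finset (Fin (k+2))) : Set (Fin (k+2))) := by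
    ext x
    simp only [Set.mem_range, Finset.coe_compl, Set.mem_compl_iff, Finset.mem_coe,
      Finset.mem_insert, Finset.mem_singleton, not_or]
    constructor
    · rintro ⟨t, rfl⟩
      have ht2 := t.2
      constructor <;> intro hx <;> rw [Fin.ext_iff] at hx <;> simp [hK, hB, hgdef] at hx <;> omega
    · rintro ⟨h1, h2⟩
      have hx2 := x.2
      have hxk : (x:ℕ) ≠ k := fun hc => h1 (Fin.ext hc)
      have hxb : (x:ℕ) ≠ k+1 := fun hc => h2 (Fin.ext hc)
      exact ⟨⟨x, by omega⟩, by rw [hgdef]⟩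
  have hKB : vK ≠ vB := by rw [hK, hB]; intro hc; rw [Fin.ext_iff] at hc; simp at hc
  have hcard : ({vK, vB}ᶜ : Finset (Fin (k+2))).card = k := compl_pair_card hKB
  have hsub : (weightMatrix a b).submatrix id g = (1 : Matrix (Fin k) (Fin k) ℤ) := by
    ext i t
    rw [Matrix.submatrix_apply, hgdef]
    have ht2 := t.2
    rw [weightMatrix, Matrix.of_apply, if_pos (by simpa using ht2), Matrix.one_apply]
    simp only [Fin.ext_iff]
    rfl
  rw [deleteTwoMinor, abs_minorOn_eq _ _ hcard g hg hr, hsub, Matrix.det_one]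
  rfl

lemma one_le_abs_minor {k : ℕ} (a b : Fin k → ℤ)
    (hnd : NonDegenerate (weightMatrix a b)) (p q : Fin (k+2)) (hpq : p ≠ q) :
    1 ≤ |deleteTwoMinor (weightMatrix a b) p q| :=
  Int.one_le_abs (hnd _ (compl_pair_card hpq))
def stT1 (k : ℕ) : Finset (Fin (k+2) × Fin (k+2)) :=
  Finset.image (fun p : Fin (k+1) => ((⟨p, by omega⟩ : Fin (k+2)), (⟨k+1, by omega⟩ : Fin (k+2)))) Finset.univ

def stT2 (k : ℕ) : Finset (Fin (k+2) × Fin (k+2)) :=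
  insert ((⟨k, by omega⟩ : Fin (k+2)), (⟨k+1, by omega⟩ : Fin (k+2)))
    (Finset.image (fun j : Fin k => ((⟨j, by omega⟩ : Fin (k+2)), (⟨k, by omega⟩ : Fin (k+2)))) Finset.univ)

def stT3 (k : ℕ) : Finset (Fin (k+2) × Fin (k+2)) :=
  Finset.image (fun p : Fin (k+1) => ((⟨0, by omega⟩ : Fin (k+2)), (⟨(p:ℕ)+1, by omega⟩ : Fin (k+2)))) Finset.univ

lemma stT1_order {k : ℕ} : ∀ e ∈ stT1 k, e.1 < e.2 := by
  intro e he
  simp only [stT1, Finset.mem_image, Finset.mem_univ, true_and] at he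
  obtain ⟨p, rfl⟩ := he
  exact Fin.mk_lt_mk.2 (by omega)

lemma stT2_order {k : ℕ} : ∀ e ∈ stT2 k, e.1 < e.2 := by
  intro e he
  simp only [stT2, Finset.mem_insert, Finset.mem_image, Finset.mem_univ, true_and] at he
  rcases he with rfl | ⟨j, rfl⟩
  · exact Fin.mk_lt_mk.2 (by omega)
  · exact Fin.mk_lt_mk.2 (by have := j.2; omega)

lemma stT3_order {k : ℕ} : ∀ e ∈ stT3 k, e.1 < e.2 := by
  intro e he
  simp only [stT3, Finset.mem_image, Finset.mem_univ, true_and] at he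
  obtain ⟨p, rfl⟩ := he
  exact Fin.mk_lt_mk.2 (by omega)

lemma stT1_tree {k : ℕ} :
    (SimpleGraph.fromEdgeSet {s | ∃ e ∈ stT1 k, s = s(e.1, e.2)}).IsTree := by
  apply star_isTree (⟨k+1, by omega⟩ : Fin (k+2))
  intro x y
  rw [SimpleGraph.fromEdgeSet_adj, Set.mem_setOf_eq]
  constructor
  · rintro ⟨⟨e, heT, hse⟩, hxy⟩
    refine ⟨hxy, ?_⟩
    simp only [stT1, Finset.mem_image, Finset.mem_univ, true_and] at heT
    obtain ⟨p, rfl⟩ := heT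
    rw [Sym2.eq_iff] at hse
    rcases hse with ⟨_, h2⟩ | ⟨h1, _⟩
    · exact Or.inr h2
    · exact Or.inl h1
  · rintro ⟨hxy, hc⟩
    refine ⟨?_, hxy⟩
    rcases hc with rfl | rfl
    · have hyv : (y:ℕ) ≠ k+1 := fun hc => hxy (Fin.ext hc.symm)
      have hy2 := y.2
      refine ⟨((⟨(y:ℕ), by omega⟩ : Fin (k+2)), (⟨k+1, by omega⟩ : Fin (k+2))), ?_, ?_⟩
      · simp only [stT1, Finset.mem_image, Finset.mem_univ, true_and]
        exact ⟨⟨(y:ℕ), by omega⟩, rfl⟩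
      · rw [Sym2.eq_iff]
        exact Or.inr ⟨rfl, Fin.ext rfl⟩
    · have hxv : (x:ℕ) ≠ k+1 := fun hc => hxy (Fin.ext hc)
      have hx2 := x.2
      refine ⟨((⟨(x:ℕ), by omega⟩ : Fin (k+2)), (⟨k+1, by omega⟩ : Fin (k+2))), ?_, ?_⟩
      · simp only [stT1, Finset.mem_image, Finset.mem_univ, true_and]
        exact ⟨⟨(x:ℕ), by omega⟩, rfl⟩
      · rw [Sym2.eq_iff]
        exact Or.inl ⟨Fin.ext rfl, rfl⟩

lemma stT2_tree {k : ℕ} :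
    (SimpleGraph.fromEdgeSet {s | ∃ e ∈ stT2 k, s = s(e.1, e.2)}).IsTree := by
  apply star_isTree (⟨k, by omega⟩ : Fin (k+2))
  intro x y
  rw [SimpleGraph.fromEdgeSet_adj, Set.mem_setOf_eq]
  constructor
  · rintro ⟨⟨e, heT, hse⟩, hxy⟩
    refine ⟨hxy, ?_⟩
    simp only [stT2, Finset.mem_insert, Finset.mem_image, Finset.mem_univ, true_and] at heT
    rcases heT with rfl | ⟨j, rfl⟩ <;> rw [Sym2.eq_iff] at hse
    · rcases hse with ⟨h1, _⟩ | ⟨_, h2⟩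
      · exact Or.inl h1
      · exact Or.inr h2
    · rcases hse with ⟨_, h2⟩ | ⟨h1, _⟩
      · exact Or.inr h2
      · exact Or.inl h1
  · rintro ⟨hxy, hc⟩
    refine ⟨?_, hxy⟩
    rcases hc with rfl | rfl
    · -- x = vK, y ≠ vK
      have hyv : (y:ℕ) ≠ k := fun hc => hxy (Fin.ext hc.symm)
      have hy2 := y.2
      by_cases hyb : (y:ℕ) = k+1
      · refine ⟨((⟨k, by omega⟩ : Fin (k+2)), (⟨k+1, by omega⟩ : Fin (k+2))), ?_, ?_⟩
        · simp [stT2]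
        · rw [Sym2.eq_iff]
          exact Or.inl ⟨rfl, Fin.ext hyb⟩
      · refine ⟨((⟨(y:ℕ), by omega⟩ : Fin (k+2)), (⟨k, by omega⟩ : Fin (k+2))), ?_, ?_⟩
        · simp only [stT2, Finset.mem_insert, Finset.mem_image, Finset.mem_univ, true_and]
          exact Or.inr ⟨⟨(y:ℕ), by omega⟩, rfl⟩
        · rw [Sym2.eq_iff]
          exact Or.inr ⟨rfl, Fin.ext rfl⟩
    · -- y = vK, x ≠ vK
      have hxv : (x:ℕ) ≠ k := fun hc => hxy (Fin.ext hc)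
      have hx2 := x.2
      by_cases hxb : (x:ℕ) = k+1
      · refine ⟨((⟨k, by omega⟩ : Fin (k+2)), (⟨k+1, by omega⟩ : Fin (k+2))), ?_, ?_⟩
        · simp [stT2]
        · rw [Sym2.eq_iff]
          exact Or.inr ⟨Fin.ext hxb, rfl⟩
      · refine ⟨((⟨(x:ℕ), by omega⟩ : Fin (k+2)), (⟨k, by omega⟩ : Fin (k+2))), ?_, ?_⟩
        · simp only [stT2, Finset.mem_insert, Finset.mem_image, Finset.mem_univ, true_and]
          exact Or.inr ⟨⟨(x:ℕ), by omega⟩, rfl⟩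
        · rw [Sym2.eq_iff]
          exact Or.inl ⟨Fin.ext rfl, rfl⟩

lemma stT3_tree {k : ℕ} :
    (SimpleGraph.fromEdgeSet {s | ∃ e ∈ stT3 k, s = s(e.1, e.2)}).IsTree := by
  apply star_isTree (⟨0, by omega⟩ : Fin (k+2))
  intro x y
  rw [SimpleGraph.fromEdgeSet_adj, Set.mem_setOf_eq]
  constructor
  · rintro ⟨⟨e, heT, hse⟩, hxy⟩
    refine ⟨hxy, ?_⟩
    simp only [stT3, Finset.mem_image, Finset.mem_univ, true_and] at heT
    obtain ⟨p, rfl⟩ := heT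
    rw [Sym2.eq_iff] at hse
    rcases hse with ⟨h1, _⟩ | ⟨_, h2⟩
    · exact Or.inl h1
    · exact Or.inr h2
  · rintro ⟨hxy, hc⟩
    refine ⟨?_, hxy⟩
    rcases hc with rfl | rfl
    · have hyv : (y:ℕ) ≠ 0 := fun hc => hxy (Fin.ext hc.symm)
      have hy2 := y.2
      refine ⟨((⟨0, by omega⟩ : Fin (k+2)), (⟨((⟨(y:ℕ)-1, by omega⟩ : Fin (k+1)):ℕ)+1, by omega⟩ : Fin (k+2))), ?_, ?_⟩
      · simp only [stT3, Finset.mem_image, Finset.mem_univ, true_and]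
        exact ⟨⟨(y:ℕ)-1, by omega⟩, rfl⟩
      · rw [Sym2.eq_iff]
        exact Or.inl ⟨rfl, Fin.ext (by simp; omega)⟩
    · have hxv : (x:ℕ) ≠ 0 := fun hc => hxy (Fin.ext hc)
      have hx2 := x.2
      refine ⟨((⟨0, by omega⟩ : Fin (k+2)), (⟨((⟨(x:ℕ)-1, by omega⟩ : Fin (k+1)):ℕ)+1, by omega⟩ : Fin (k+2))), ?_, ?_⟩
      · simp only [stT3, Finset.mem_image, Finset.mem_univ, true_and]
        exact ⟨⟨(x:ℕ)-1, by omega⟩, rfl⟩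
      · rw [Sym2.eq_iff]
        exact Or.inr ⟨Fin.ext (by simp; omega), rfl⟩
lemma abs_minor_a' {k : ℕ} (a b : Fin k → ℤ) (j : Fin k) (p q : Fin (k+2))
    (hp : (p:ℕ) = (j:ℕ)) (hq : (q:ℕ) = k+1) :
    |deleteTwoMinor (weightMatrix a b) p q| = |a j| := by
  have h1 : p = ⟨j, Nat.lt_succ_of_lt (Nat.lt_succ_of_lt j.isLt)⟩ := Fin.ext hp
  have h2 : q = ⟨k+1, Nat.lt_succ_self (k+1)⟩ := Fin.ext hq
  subst h1; subst h2; exact abs_minor_a a b j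

lemma abs_minor_b' {k : ℕ} (a b : Fin k → ℤ) (j : Fin k) (p q : Fin (k+2))
    (hp : (p:ℕ) = (j:ℕ)) (hq : (q:ℕ) = k) :
    |deleteTwoMinor (weightMatrix a b) p q| = |b j| := by
  have h1 : p = ⟨j, Nat.lt_succ_of_lt (Nat.lt_succ_of_lt j.isLt)⟩ := Fin.ext hp
  have h2 : q = ⟨k, Nat.lt_succ_of_lt (Nat.lt_succ_self k)⟩ := Fin.ext hq
  subst h1; subst h2; exact abs_minor_b a b j

lemma abs_minor_one' {k : ℕ} (a b : Fin k → ℤ) (p q : Fin (k+2))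
    (hp : (p:ℕ) = k) (hq : (q:ℕ) = k+1) :
    |deleteTwoMinor (weightMatrix a b) p q| = 1 := by
  have h1 : p = ⟨k, Nat.lt_succ_of_lt (Nat.lt_succ_self k)⟩ := Fin.ext hp
  have h2 : q = ⟨k+1, Nat.lt_succ_self (k+1)⟩ := Fin.ext hq
  subst h1; subst h2; exact abs_minor_one a b

lemma stT1_prod {k : ℕ} (a b : Fin k → ℤ) :
    ∏ e ∈ stT1 k, |deleteTwoMinor (weightMatrix a b) e.1 e.2| = |∏ i, a i| := by
  rw [stT1, Finset.prod_image (by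
    intro x _ y _ h
    rw [Prod.ext_iff] at h
    exact Fin.ext (by simpa [Fin.ext_iff] using h.1))]
  have : (∏ p : Fin (k+1),
      |deleteTwoMinor (weightMatrix a b) ((⟨(p:ℕ), by omega⟩ : Fin (k+2)), (⟨k+1, by omega⟩ : Fin (k+2))).1
        ((⟨(p:ℕ), by omega⟩ : Fin (k+2)), (⟨k+1, by omega⟩ : Fin (k+2))).2|)
      = ∏ p : Fin (k+1), if h : (p:ℕ) < k then |a ⟨(p:ℕ), h⟩| else 1 := by
    refine Finset.prod_congr rfl fun p _ => ?_
    by_cases h : (p:ℕ) < k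
    · rw [dif_pos h]; exact abs_minor_a' a b ⟨(p:ℕ), h⟩ _ _ rfl rfl
    · rw [dif_neg h]
      exact abs_minor_one' a b _ _ (by have := p.2; simp; omega) rfl
  rw [this, Fin.prod_univ_castSucc]
  simp only [Fin.coe_castSucc, Fin.is_lt, dif_pos, Fin.eta, Fin.val_last, lt_irrefl, dif_neg,
    mul_one, Finset.abs_prod]
  rw [dif_neg not_false, mul_one]

lemma stT2_prod {k : ℕ} (a b : Fin k → ℤ) :
    ∏ e ∈ stT2 k, |deleteTwoMinor (weightMatrix a b) e.1 e.2| = |∏ i, b i| := by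
  rw [stT2, Finset.prod_insert (by
    simp only [Finset.mem_image, Finset.mem_univ, true_and, not_exists]
    intro j h
    rw [Prod.ext_iff] at h
    have := h.2
    rw [Fin.ext_iff] at this
    simp at this)]
  rw [Finset.prod_image (by
    intro x _ y _ h
    rw [Prod.ext_iff] at h
    exact Fin.ext (by simpa [Fin.ext_iff] using h.1))]
  rw [abs_minor_one' a b _ _ rfl rfl]
  rw [Finset.prod_congr rfl (fun j (_ : j ∈ Finset.univ) => abs_minor_b' a b j
    (⟨(j:ℕ), by omega⟩ : Fin (k+2)) (⟨k, by omega⟩ : Fin (k+2)) rfl rfl)]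
  rw [one_mul, Finset.abs_prod]

lemma stT3_prod_ge {k : ℕ} (a b : Fin k → ℤ) (hnd : NonDegenerate (weightMatrix a b)) :
    1 ≤ ∏ e ∈ stT3 k, |deleteTwoMinor (weightMatrix a b) e.1 e.2| := by
  have hpos : 0 < ∏ e ∈ stT3 k, |deleteTwoMinor (weightMatrix a b) e.1 e.2| := by
    apply Finset.prod_pos
    intro e he
    have h1 : (1:ℤ) ≤ |deleteTwoMinor (weightMatrix a b) e.1 e.2| :=
      one_le_abs_minor a b hnd e.1 e.2 (stT3_order e he).ne
    omega
  omega
open scoped Classical in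
/-- A spanning tree on the vertices `{1, …, k+2}`, encoded as a finite set `T` of ordered
pairs `(p, q)` with `p < q` (the canonical representatives of the unordered edges) such that
the resulting simple graph on `Fin (k+2)` is a tree.  Summing the weights
`w(T) = ∏_{{p,q} ∈ T} |Δ_{p,q}|` over all spanning trees gives a number strictly greater
than `|a₁⋯a_k| + |b₁⋯b_k|`. -/
theorem stmt7 {k : ℕ} (hk : 1 ≤ k) (a b : Fin k → ℤ)
    (hnd : NonDegenerate (weightMatrix a b)) :
    (∑ T ∈ Finset.univ.filter
        (fun T : Finset (Fin (k+2) × Fin (k+2)) =>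
          (∀ e ∈ T, e.1 < e.2) ∧
          (SimpleGraph.fromEdgeSet {s | ∃ e ∈ T, s = s(e.1, e.2)}).IsTree),
      ∏ e ∈ T, |deleteTwoMinor (weightMatrix a b) e.1 e.2|) >
    |∏ i, a i| + |∏ i, b i| := by
  -- key membership facts for distinctness
  have hKB1 : ((⟨k, by omega⟩ : Fin (k+2)), (⟨k+1, by omega⟩ : Fin (k+2))) ∈ stT1 k :=
    Finset.mem_image.2 ⟨⟨k, by omega⟩, Finset.mem_univ _, rfl⟩
  have hKB2 : ((⟨k, by omega⟩ : Fin (k+2)), (⟨k+1, by omega⟩ : Fin (k+2))) ∈ stT2 k :=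
    Finset.mem_insert_self _ _
  have hKB3 : ((⟨k, by omega⟩ : Fin (k+2)), (⟨k+1, by omega⟩ : Fin (k+2))) ∉ stT3 k := by
    intro hc
    simp only [stT3, Finset.mem_image, Finset.mem_univ, true_and] at hc
    obtain ⟨p, hp⟩ := hc
    have h1 := congrArg Prod.fst hp
    rw [Fin.ext_iff] at h1
    simp at h1
    omega
  have h01 : ((⟨0, by omega⟩ : Fin (k+2)), (⟨k+1, by omega⟩ : Fin (k+2))) ∈ stT1 k :=
    Finset.mem_image.2 ⟨⟨0, by omega⟩, Finset.mem_univ _, rfl⟩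
  have h02 : ((⟨0, by omega⟩ : Fin (k+2)), (⟨k+1, by omega⟩ : Fin (k+2))) ∉ stT2 k := by
    intro hc
    simp only [stT2, Finset.mem_insert, Finset.mem_image, Finset.mem_univ, true_and] at hc
    rcases hc with hc | ⟨j, hc⟩
    · have h1 := congrArg Prod.fst hc
      rw [Fin.ext_iff] at h1
      simp at h1
      omega
    · have h1 := congrArg Prod.snd hc
      rw [Fin.ext_iff] at h1
      simp at h1
  have hne12 : stT1 k ≠ stT2 k := fun h => h02 (h ▸ h01)
  have hne13 : stT1 k ≠ stT3 k := fun h => hKB3 (h ▸ hKB1)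
  have hne23 : stT2 k ≠ stT3 k := fun h => hKB3 (h ▸ hKB2)
  refine lt_of_lt_of_le ?_
    (Finset.sum_le_sum_of_subset_of_nonneg (s := {stT1 k, stT2 k, stT3 k}) ?_ ?_)
  · rw [Finset.sum_insert (by
        simp only [Finset.mem_insert, Finset.mem_singleton]
        push_neg
        exact ⟨hne12, hne13⟩),
      Finset.sum_insert (by simpa using hne23),
      Finset.sum_singleton, stT1_prod a b, stT2_prod a b]
    have h3 := stT3_prod_ge a b hnd
    linarith
  · intro T hT
    simp only [Finset.mem_insert, Finset.mem_singleton] at hT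
    rw [Finset.mem_filter]
    rcases hT with rfl | rfl | rfl
    · exact ⟨Finset.mem_univ _, stT1_order, stT1_tree⟩
    · exact ⟨Finset.mem_univ _, stT2_order, stT2_tree⟩
    · exact ⟨Finset.mem_univ _, stT3_order, stT3_tree⟩
  · exact fun T _ _ => Finset.prod_nonneg fun e _ => abs_nonneg _
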